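/- Let B ≥ 1 and let M_0, M_1, …, M_B be real random variables on a common probability space such that (exchangeability) for every permutation σ of {0,1,…,B} the joint law of (M_{σ(0)},…,M_{σ(B)}) equals the joint law of (M_0,…,M_B), and (no ties) P(M_i = M_j) = 0 for all i ≠ j. Then for every α ∈ [0,1], P( (B+1)^{-1}·(Σ_{i=1}^B 1{M_0 ≤ M_i} + 1) ≤ α ) = ⌊(B+1)α⌋/(B+1). -/

import Mathlib

open MeasureTheory ENNReal

noncomputable section

namespace ResamplingAux

variable {n : ℕ}

/-- rank of coordinate j among coordinates of v (counting itself). -/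
def rk (v : Fin n → ℝ) (j : Fin n) : ℕ :=
  (Finset.univ.filter fun i => v j ≤ v i).card

lemma rk_eq_sum (v : Fin n → ℝ) (j : Fin n) :
    rk v j = ∑ i : Fin n, if v j ≤ v i then 1 else 0 := by
  rw [rk, Finset.card_filter]

lemma measurable_rk (j : Fin n) : Measurable fun v : Fin n → ℝ => rk v j := by
  simp only [rk_eq_sum]
  exact Finset.measurable_sum _ fun i _ =>
    Measurable.ite (measurableSet_le (measurable_pi_apply j) (measurable_pi_apply i))
      measurable_const measurable_const

lemma rk_comp_perm (v : Fin n → ℝ) (σ : Equiv.Perm (Fin n)) (j : Fin n) :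
    rk (fun i => v (σ i)) j = rk v (σ j) := by
  unfold rk
  apply Finset.card_bij (fun i _ => σ i)
  · intro a ha; simp at ha ⊢; exact ha
  · intro a _ b _ h; exact σ.injective h
  · intro b hb; exact ⟨σ.symm b, by simpa using hb, by simp⟩

lemma one_le_rk (v : Fin n → ℝ) (j : Fin n) : 1 ≤ rk v j :=
  Finset.card_pos.2 ⟨j, by simp⟩

lemma rk_le (v : Fin n → ℝ) (j : Fin n) : rk v j ≤ n := by
  simpa [rk] using Finset.card_filter_le Finset.univ (fun i => v j ≤ v i)

lemma rk_lt_rk (v : Fin n → ℝ) {j k : Fin n} (h : v j < v k) : rk v k < rk v j := by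
  apply Finset.card_lt_card
  constructor
  · intro i hi; simp at hi ⊢; exact h.le.trans hi
  · intro hsub
    have := hsub (by simp : j ∈ Finset.univ.filter fun i => v j ≤ v i)
    simp at this
    exact absurd this (not_le.2 h)

lemma rk_injective {v : Fin n → ℝ} (hv : Function.Injective v) :
    Function.Injective (rk v) := by
  intro j k h
  by_contra hjk
  have hne : v j ≠ v k := fun e => hjk (hv e)
  rcases hne.lt_or_gt with hlt | hlt
  · exact absurd h.symm (rk_lt_rk v hlt).ne
  · exact absurd h (rk_lt_rk v hlt).ne

lemma rk_surjective {v : Fin n → ℝ} (hv : Function.Injective v)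
    {r : ℕ} (hr1 : 1 ≤ r) (hrn : r ≤ n) : ∃ j, rk v j = r := by
  have hn : 0 < n := lt_of_lt_of_le hr1 hrn
  set g : Fin n → Fin n := fun j => ⟨rk v j - 1, by
    have := rk_le v j; have := one_le_rk v j; omega⟩ with hg
  have hginj : Function.Injective g := by
    intro a b hab
    apply rk_injective hv
    have h1 := one_le_rk v a
    have h2 := one_le_rk v b
    have : rk v a - 1 = rk v b - 1 := congrArg Fin.val hab
    omega
  have hgsurj : Function.Surjective g := Finite.surjective_of_injective hginj
  obtain ⟨j, hj⟩ := hgsurj ⟨r - 1, by omega⟩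
  refine ⟨j, ?_⟩
  have := one_le_rk v j
  have : rk v j - 1 = r - 1 := congrArg Fin.val hj
  omega

/-- Uniformity of the rank under exchangeability and no ties. -/
lemma rank_uniform {Ω : Type*} [MeasurableSpace Ω] (P : Measure Ω) [IsProbabilityMeasure P]
    {B : ℕ} (M : Fin (B + 1) → Ω → ℝ)
    (hmeas : ∀ i, Measurable (M i))
    (hexch : ∀ σ : Equiv.Perm (Fin (B + 1)),
      P.map (fun ω => fun i => M (σ i) ω) = P.map (fun ω => fun i => M i ω))
    (hties : ∀ i j, i ≠ j → P {ω | M i ω = M j ω} = 0)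
    {r : ℕ} (hr1 : 1 ≤ r) (hr2 : r ≤ B + 1) :
    P {ω | rk (fun i => M i ω) 0 = r} = ((B : ℝ≥0∞) + 1)⁻¹ := by
  have hvm : Measurable (fun ω => fun i => M i ω) := measurable_pi_lambda _ hmeas
  have hA : ∀ j : Fin (B + 1), MeasurableSet {v : Fin (B + 1) → ℝ | rk v j = r} :=
    fun j => measurable_rk j (measurableSet_singleton r)
  have hNmeas : ∀ j : Fin (B + 1), MeasurableSet {ω | rk (fun i => M i ω) j = r} :=
    fun j => ((measurable_rk j).comp hvm) (measurableSet_singleton r)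
  -- equidistribution of ranks
  have equi : ∀ j : Fin (B + 1),
      P {ω | rk (fun i => M i ω) j = r} = P {ω | rk (fun i => M i ω) 0 = r} := by
    intro j
    set σ := Equiv.swap (0 : Fin (B + 1)) j with hσ
    have hσm : Measurable (fun ω => fun i => M (σ i) ω) :=
      measurable_pi_lambda _ fun i => hmeas (σ i)
    have h1 : P {ω | rk (fun i => M i ω) 0 = r}
        = P.map (fun ω => fun i => M i ω) {v | rk v 0 = r} := by
      rw [Measure.map_apply hvm (hA 0)]; rfl
    have h2 : P.map (fun ω => fun i => M (σ i) ω) {v | rk v 0 = r}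
        = P {ω | rk (fun i => M i ω) j = r} := by
      rw [Measure.map_apply hσm (hA 0)]
      congr 1
      ext ω
      have hrw : rk (fun i => M (σ i) ω) 0 = rk (fun i => M i ω) j := by
        have h := rk_comp_perm (fun i' => M i' ω) σ 0
        simpa [hσ, Equiv.swap_apply_left] using h
      simp only [Set.mem_preimage, Set.mem_setOf_eq, hrw]
    rw [h1, ← hexch σ, h2]
  -- the no-ties event
  set E : Set Ω := ⋂ (i) (j) (_ : i ≠ j), {ω | M i ω ≠ M j ω} with hE
  have hEmeas : MeasurableSet E := by
    refine MeasurableSet.iInter fun i => MeasurableSet.iInter fun j =>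
      MeasurableSet.iInter fun _ => ?_
    exact (measurableSet_eq_fun (hmeas i) (hmeas j)).compl
  have hEinj : ∀ ω ∈ E, Function.Injective fun i => M i ω := by
    intro ω hω i j hij
    by_contra hne
    have := Set.mem_iInter.1 (Set.mem_iInter.1 (Set.mem_iInter.1 hω i) j) hne
    exact this hij
  have hEc : P Eᶜ = 0 := by
    have hsub : Eᶜ ⊆ ⋃ (i) (j) (_ : i ≠ j), {ω | M i ω = M j ω} := by
      intro ω hω
      simp only [hE, Set.compl_iInter, Set.mem_iUnion, Set.mem_compl_iff,
        Set.mem_setOf_eq, not_not] at hω ⊢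
      exact hω
    exact measure_mono_null hsub (measure_iUnion_null fun i =>
      measure_iUnion_null fun j => measure_iUnion_null fun h => hties i j h)
  have hE1 : P E = 1 := by
    have h := measure_add_measure_compl hEmeas (μ := P)
    rw [hEc, add_zero, measure_univ] at h
    exact h
  -- decomposition
  set A : Fin (B + 1) → Set Ω := fun j => {ω | rk (fun i => M i ω) j = r} ∩ E with hAdef
  have hdisj : Pairwise (Function.onFun Disjoint A) := by
    intro j k hjk
    simp only [Function.onFun]
    rw [Set.disjoint_left]
    rintro ω ⟨hj1, hj2⟩ ⟨hk1, hk2⟩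
    exact hjk (rk_injective (hEinj ω hj2) (hj1.trans hk1.symm))
  have hunion : ⋃ j, A j = E := by
    apply Set.Subset.antisymm
    · exact Set.iUnion_subset fun j => Set.inter_subset_right
    · intro ω hω
      obtain ⟨j, hj⟩ := rk_surjective (hEinj ω hω) hr1 hr2
      exact Set.mem_iUnion.2 ⟨j, hj, hω⟩
  have hsum : P E = ∑ j : Fin (B + 1), P (A j) := by
    rw [← hunion, measure_iUnion hdisj fun j => (hNmeas j).inter hEmeas, tsum_fintype]
  have hAval : ∀ j, P (A j) = P {ω | rk (fun i => M i ω) 0 = r} := by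
    intro j
    rw [hAdef]
    simp only
    rw [measure_inter_conull hEc, equi j]
  rw [hE1] at hsum
  simp only [hAval, Finset.sum_const, Finset.card_univ, Fintype.card_fin,
    nsmul_eq_mul] at hsum
  have hBne : ((B : ℝ≥0∞) + 1) ≠ 0 := by simp
  have hBnt : ((B : ℝ≥0∞) + 1) ≠ ⊤ := by
    exact ENNReal.add_ne_top.2 ⟨ENNReal.natCast_ne_top B, ENNReal.one_ne_top⟩
  have hcast : ((B + 1 : ℕ) : ℝ≥0∞) = (B : ℝ≥0∞) + 1 := by push_cast; ring
  rw [hcast] at hsum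
  rw [eq_comm] at hsum
  have hx := (ENNReal.eq_div_iff hBne hBnt).2 hsum
  rw [hx, one_div]

end ResamplingAux

/-- exact level of the resampling p-value for exchangeable
statistics without ties. -/
theorem resampling_pvalue_exact_level
    {Ω : Type*} [MeasurableSpace Ω] (P : Measure Ω) [IsProbabilityMeasure P]
    {B : ℕ} (hB : 1 ≤ B) (M : Fin (B + 1) → Ω → ℝ)
    (hmeas : ∀ i, Measurable (M i))
    (hexch : ∀ σ : Equiv.Perm (Fin (B + 1)),
      P.map (fun ω => fun i => M (σ i) ω) = P.map (fun ω => fun i => M i ω))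
    (hties : ∀ i j, i ≠ j → P {ω | M i ω = M j ω} = 0)
    (α : ℝ) (hα0 : 0 ≤ α) (hα1 : α ≤ 1) :
    P {ω | ((∑ i : Fin B, if M 0 ω ≤ M i.succ ω then (1 : ℝ) else 0) + 1)
            / ((B : ℝ) + 1) ≤ α}
      = ENNReal.ofReal ((⌊((B : ℝ) + 1) * α⌋ : ℝ) / ((B : ℝ) + 1)) := by
  classical
  have hB1 : (0 : ℝ) < (B : ℝ) + 1 := by positivity
  have hx0 : 0 ≤ ((B : ℝ) + 1) * α := by positivity
  set m := ⌊((B : ℝ) + 1) * α⌋₊ with hm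
  have hfloor : ((⌊((B : ℝ) + 1) * α⌋ : ℤ) : ℝ) = (m : ℝ) :=
    (natCast_floor_eq_intCast_floor hx0).symm
  have hmle : m ≤ B + 1 := by
    have h1 : ((B : ℝ) + 1) * α ≤ (B : ℝ) + 1 := by nlinarith
    calc m ≤ ⌊((B : ℝ) + 1)⌋₊ := Nat.floor_le_floor h1
      _ = B + 1 := by
        rw [show ((B : ℝ) + 1) = ((B + 1 : ℕ) : ℝ) by push_cast; ring, Nat.floor_natCast]
  have hset : {ω | ((∑ i : Fin B, if M 0 ω ≤ M i.succ ω then (1 : ℝ) else 0) + 1)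
          / ((B : ℝ) + 1) ≤ α}
      = ⋃ r ∈ Finset.Icc 1 m, {ω | ResamplingAux.rk (fun i => M i ω) 0 = r} := by
    ext ω
    have hsumeq : ((ResamplingAux.rk (fun i => M i ω) 0 : ℕ) : ℝ)
        = (∑ i : Fin B, if M 0 ω ≤ M i.succ ω then (1 : ℝ) else 0) + 1 := by
      rw [ResamplingAux.rk_eq_sum]
      push_cast
      rw [Fin.sum_univ_succ]
      simp [add_comm]
    simp only [Set.mem_setOf_eq, Set.mem_iUnion, Finset.mem_Icc]
    rw [← hsumeq, div_le_iff₀ hB1, mul_comm α, ← Nat.le_floor_iff hx0, ← hm]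
    constructor
    · intro h
      exact ⟨_, ⟨ResamplingAux.one_le_rk _ 0, h⟩, rfl⟩
    · rintro ⟨r, ⟨_, hr2⟩, hrk⟩
      omega
  have hvm : Measurable (fun ω => fun i => M i ω) := measurable_pi_lambda _ hmeas
  have hmeasr : ∀ r : ℕ, MeasurableSet {ω | ResamplingAux.rk (fun i => M i ω) 0 = r} :=
    fun r => ((ResamplingAux.measurable_rk 0).comp hvm) (measurableSet_singleton r)
  have hdisj : (↑(Finset.Icc 1 m) : Set ℕ).PairwiseDisjoint
      (fun r => {ω | ResamplingAux.rk (fun i => M i ω) 0 = r}) := by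
    intro r _ s _ hrs
    rw [Function.onFun, Set.disjoint_left]
    rintro ω h1 h2
    exact hrs ((Set.mem_setOf_eq ▸ h1).symm.trans h2)
  rw [hset, measure_biUnion_finset hdisj fun r _ => hmeasr r]
  have hval : ∀ r ∈ Finset.Icc 1 m,
      P {ω | ResamplingAux.rk (fun i => M i ω) 0 = r} = ((B : ℝ≥0∞) + 1)⁻¹ := by
    intro r hr
    rw [Finset.mem_Icc] at hr
    exact ResamplingAux.rank_uniform P M hmeas hexch hties hr.1 (hr.2.trans hmle)
  rw [Finset.sum_congr rfl hval, Finset.sum_const, Nat.card_Icc]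
  simp only [Nat.add_sub_cancel, nsmul_eq_mul]
  rw [hfloor]
  rw [ENNReal.ofReal_div_of_pos hB1, ENNReal.ofReal_natCast,
    show ((B : ℝ) + 1) = ((B + 1 : ℕ) : ℝ) by push_cast; ring, ENNReal.ofReal_natCast,
    div_eq_mul_inv]
  push_cast
  ring


end
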